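/- Let p, q, h be as above (deg p = deg q = 0, deg h = 1, d(h) = p − q), and define the symmetrization ⟨h⟩ := (1/m!) Σ_{σ ∈ Σ_m} ⟨h⟩_ns · σ over the symmetric group Σ_m acting by permuting tensor factors with Koszul signs. Then ⟨h⟩ is Σ_m-equivariant and d(⟨h⟩) = p^{⊗m} − q^{⊗m}. -/

import Mathlib

open scoped TensorProduct

/-- The differential on the `m`-th tensor power of `(M, d)` given by the Leibniz rule. -/
noncomputable def dPow (k M : Type*) [Field k] [AddCommGroup M] [Module k M]
    (m : ℕ) (d : M →ₗ[k] M) :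
    (⨂[k] _ : Fin m, M) →ₗ[k] ⨂[k] _ : Fin m, M :=
  ∑ i : Fin m,
    PiTensorProduct.map (Function.update (fun _ : Fin m => (LinearMap.id : M →ₗ[k] M)) i d)

/-- The action of a permutation `σ ∈ Σ_m` on the `m`-th tensor power, permuting the tensor
factors.  (For the elements considered here, at most one tensor factor is odd, so all
Koszul signs are `+1`.) -/
noncomputable def permAction (k M : Type*) [Field k] [AddCommGroup M] [Module k M]
    (m : ℕ) (σ : Equiv.Perm (Fin m)) :
    (⨂[k] _ : Fin m, M) →ₗ[k] ⨂[k] _ : Fin m, M :=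
  (PiTensorProduct.reindex k (fun _ : Fin m => M) σ).toLinearMap

/-- The element `⟨h⟩_ns = Σ_{s=0}^{m−1} p^{⊗s} ⊗ h ⊗ q^{⊗(m−s−1)}`. -/
noncomputable def hNS (k M : Type*) [Field k] [AddCommGroup M] [Module k M]
    (m : ℕ) (p q h : M) : ⨂[k] _ : Fin m, M :=
  ∑ s ∈ Finset.range m,
    PiTensorProduct.tprod k
      (fun i : Fin m => if i.val < s then p else if i.val = s then h else q)

/-- The symmetrization `⟨h⟩ = (1/m!) Σ_{σ ∈ Σ_m} ⟨h⟩_ns · σ`. -/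
noncomputable def hSym (k M : Type*) [Field k] [AddCommGroup M] [Module k M]
    (m : ℕ) (p q h : M) : ⨂[k] _ : Fin m, M :=
  (m.factorial : k)⁻¹ • ∑ σ : Equiv.Perm (Fin m), permAction k M m σ (hNS k M m p q h)

section Aux

variable (k M : Type*) [Field k] [AddCommGroup M] [Module k M] (m : ℕ) (d : M →ₗ[k] M)

lemma dPow_tprod (f : Fin m → M) :
    dPow k M m d (PiTensorProduct.tprod k f)
      = ∑ i : Fin m, PiTensorProduct.tprod k (Function.update f i (d (f i))) := by
  unfold dPow
  rw [LinearMap.sum_apply]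
  refine Finset.sum_congr rfl fun i _ => ?_
  rw [PiTensorProduct.map_tprod]
  congr 1
  funext j
  by_cases hji : j = i
  · subst hji; simp [Function.update_self]
  · simp [Function.update_of_ne hji]

lemma permAction_comm_dPow (σ : Equiv.Perm (Fin m)) (x : ⨂[k] _ : Fin m, M) :
    permAction k M m σ (dPow k M m d x) = dPow k M m d (permAction k M m σ x) := by
  have : (permAction k M m σ) ∘ₗ (dPow k M m d)
      = (dPow k M m d) ∘ₗ (permAction k M m σ) := by
    apply PiTensorProduct.ext
    ext f
    simp only [LinearMap.compMultilinearMap_apply, LinearMap.comp_apply]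
    rw [dPow_tprod]
    simp only [permAction, LinearEquiv.coe_coe, map_sum, PiTensorProduct.reindex_tprod]
    rw [dPow_tprod]
    refine Fintype.sum_equiv σ _ _ fun i => ?_
    congr 1
    funext j
    by_cases hji : j = σ i
    · subst hji
      rw [Equiv.symm_apply_apply]
      simp
    · have : σ.symm j ≠ i := fun hc => hji (by rw [← hc, Equiv.apply_symm_apply])
      simp [Function.update_of_ne hji, Function.update_of_ne this]
  exact LinearMap.congr_fun this x

lemma dPow_hNS (p q h : M) (hp : d p = 0) (hq : d q = 0) (hh : d h = p - q) :
    dPow k M m d (hNS k M m p q h)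
      = PiTensorProduct.tprod k (fun _ : Fin m => p)
        - PiTensorProduct.tprod k (fun _ : Fin m => q) := by
  set A : ℕ → (⨂[k] _ : Fin m, M) :=
    fun t => PiTensorProduct.tprod k (fun i : Fin m => if i.val < t then p else q) with hA
  have key : dPow k M m d (hNS k M m p q h)
      = ∑ s ∈ Finset.range m, (A (s + 1) - A s) := by
    unfold hNS
    rw [map_sum]
    refine Finset.sum_congr rfl fun s hs => ?_
    have hsm : s < m := Finset.mem_range.mp hs
    set f : Fin m → M := fun i : Fin m => if i.val < s then p else if i.val = s then h else q
      with hf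
    rw [dPow_tprod]
    rw [Finset.sum_eq_single (⟨s, hsm⟩ : Fin m)]
    · have hfs : f ⟨s, hsm⟩ = h := by simp [hf]
      rw [hfs, hh]
      have := MultilinearMap.map_update_sub (PiTensorProduct.tprod k (s := fun _ : Fin m => M))
        f ⟨s, hsm⟩ p q
      rw [this]
      congr 1
      · congr 1
        funext j
        by_cases hj : j = (⟨s, hsm⟩ : Fin m)
        · subst hj; simp [Function.update_self]
        · have hjv : j.val ≠ s := fun hc => hj (Fin.ext hc)
          simp only [Function.update_of_ne hj, hf]
          rcases lt_trichotomy j.val s with h1 | h1 | h1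
          · simp [h1, Nat.lt_succ_of_lt h1]
          · exact absurd h1 hjv
          · simp [Nat.not_lt.mpr h1.le, hjv, Nat.not_lt.mpr (Nat.succ_le_of_lt h1)]
      · congr 1
        funext j
        by_cases hj : j = (⟨s, hsm⟩ : Fin m)
        · subst hj; simp [Function.update_self]
        · have hjv : j.val ≠ s := fun hc => hj (Fin.ext hc)
          simp [Function.update_of_ne hj, hf, hjv]
    · intro i _ hi
      have hiv : i.val ≠ s := fun hc => hi (Fin.ext hc)
      have hdfi : d (f i) = 0 := by
        simp only [hf]
        rcases lt_or_ge i.val s with h1 | h1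
        · simpa [h1] using hp
        · simp [Nat.not_lt.mpr h1, hiv, hq]
      refine MultilinearMap.map_coord_zero _ i ?_
      rw [Function.update_self, hdfi]
    · intro hc
      exact absurd (Finset.mem_univ _) hc
  rw [key, Finset.sum_range_sub A m]
  have hAm : A m = PiTensorProduct.tprod k (fun _ : Fin m => p) := by
    simp [hA, Fin.is_lt]
  have hA0 : A 0 = PiTensorProduct.tprod k (fun _ : Fin m => q) := by
    simp [hA]
  rw [hAm, hA0]

end Aux

/-- With `deg p = deg q = 0`, `deg h = 1` and `d(h) = p − q`
(`d(p) = d(q) = 0`), the symmetrization `⟨h⟩ = (1/m!) Σ_{σ∈Σ_m} ⟨h⟩_ns·σ` is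
`Σ_m`-equivariant (i.e. invariant under the permutation action, all Koszul signs being
`+1` here) and satisfies `d(⟨h⟩) = p^{⊗m} − q^{⊗m}`. -/
theorem stmt_8 (k M : Type*) [Field k] [CharZero k] [AddCommGroup M] [Module k M]
    (m : ℕ) (hm : 1 ≤ m)
    (d : M →ₗ[k] M) (hd : d ∘ₗ d = 0)
    (p q h : M) (hp : d p = 0) (hq : d q = 0) (hh : d h = p - q) :
    (∀ σ : Equiv.Perm (Fin m), permAction k M m σ (hSym k M m p q h) = hSym k M m p q h) ∧
    dPow k M m d (hSym k M m p q h)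
      = PiTensorProduct.tprod k (fun _ : Fin m => p)
        - PiTensorProduct.tprod k (fun _ : Fin m => q) := by
  have hfac : (m.factorial : k) ≠ 0 := Nat.cast_ne_zero.mpr m.factorial_ne_zero
  constructor
  · intro σ
    unfold hSym
    rw [map_smul, map_sum]
    congr 1
    refine Fintype.sum_equiv (Equiv.mulLeft σ) _ _ fun τ => ?_
    simp only [Equiv.coe_mulLeft]
    unfold permAction
    simp only [LinearEquiv.coe_coe]
    exact PiTensorProduct.reindex_reindex τ σ _
  · unfold hSym
    rw [map_smul, map_sum]
    have : ∀ σ : Equiv.Perm (Fin m),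
        dPow k M m d (permAction k M m σ (hNS k M m p q h))
          = PiTensorProduct.tprod k (fun _ : Fin m => p)
            - PiTensorProduct.tprod k (fun _ : Fin m => q) := by
      intro σ
      rw [← permAction_comm_dPow, dPow_hNS k M m d p q h hp hq hh]
      unfold permAction
      simp only [LinearEquiv.coe_coe, map_sub, PiTensorProduct.reindex_tprod]
    rw [Finset.sum_congr rfl fun σ _ => this σ, Finset.sum_const, Finset.card_univ,
      Fintype.card_perm, Fintype.card_fin, ← Nat.cast_smul_eq_nsmul k, smul_smul,
      inv_mul_cancel₀ hfac, one_smul]
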